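/- arXiv:1011.1825 — 2 statements merged into one kernel-verified Lean document; each statement's English description precedes it below -/
import Mathlib

section
/- If m is an integer with at most k distinct prime factors, then Ψ(m)/m ≤ Ψ(N_k)/N_k, where N_k is the product of the first k primes. -/
open Finset Real Filter

/-- Dedekind psi function `Ψ(n) = n ∏_{p ∣ n} (1 + 1/p)`. -/
noncomputable def dedekindPsi (n : ℕ) : ℝ := n * ∏ p ∈ n.primeFactors, (1 + 1/(p:ℝ))

/-- `nthPrime n` is the n-th prime `p_n` (1-indexed: `nthPrime 1 = 2`). -/
noncomputable def nthPrime (n : ℕ) : ℕ := Nat.nth Nat.Prime (n - 1)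

/-- `primorialN k = N_k`, the product of the first `k` primes. -/
noncomputable def primorialN (k : ℕ) : ℕ := ∏ i ∈ Finset.range k, Nat.nth Nat.Prime i

private lemma inf_primes : {n | Nat.Prime n}.Infinite := Nat.infinite_setOf_prime

private lemma nth_le_orderEmb (S : Finset ℕ) (hS : ∀ p ∈ S, p.Prime) (j : Fin S.card) :
    Nat.nth Nat.Prime j ≤ S.orderEmbOfFin rfl j := by
  set e := S.orderEmbOfFin (rfl : S.card = S.card)
  have hpj : Nat.Prime (e j) := hS _ (S.orderEmbOfFin_mem rfl j)
  have hcount : (j : ℕ) ≤ Nat.count Nat.Prime (e j) := by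
    have hsub : (Finset.Iio j).image (fun i => e i) ⊆
        (Finset.range (e j)).filter Nat.Prime := by
      intro x hx
      simp only [Finset.mem_image, Finset.mem_Iio] at hx
      obtain ⟨i, hi, rfl⟩ := hx
      simp only [Finset.mem_filter, Finset.mem_range]
      exact ⟨e.strictMono hi, hS _ (S.orderEmbOfFin_mem rfl i)⟩
    have hcard : ((Finset.Iio j).image (fun i => e i)).card = (j : ℕ) := by
      rw [Finset.card_image_of_injective _ e.injective, Fin.card_Iio]
    calc (j : ℕ) = _ := hcard.symm
      _ ≤ ((Finset.range (e j)).filter Nat.Prime).card := Finset.card_le_card hsub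
      _ = Nat.count Nat.Prime (e j) := (Nat.count_eq_card_filter_range _ _).symm
  calc Nat.nth Nat.Prime j ≤ Nat.nth Nat.Prime (Nat.count Nat.Prime (e j)) :=
        (Nat.nth_le_nth inf_primes).2 hcount
    _ = e j := Nat.nth_count hpj

private lemma prod_psi_le (S : Finset ℕ) (hS : ∀ p ∈ S, p.Prime) {k : ℕ} (hk : S.card ≤ k) :
    ∏ p ∈ S, (1 + 1/(p:ℝ)) ≤ ∏ i ∈ Finset.range k, (1 + 1/(Nat.nth Nat.Prime i : ℝ)) := by
  set e := S.orderEmbOfFin (rfl : S.card = S.card)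
  have h1 : ∏ p ∈ S, (1 + 1/(p:ℝ)) = ∏ j : Fin S.card, (1 + 1/(e j : ℝ)) := by
    rw [← Finset.prod_coe_sort S (fun p => (1 + 1/(p:ℝ))),
      ← (S.orderIsoOfFin rfl).toEquiv.prod_comp (fun p : S => (1 + 1/((p : ℕ):ℝ)))]
    exact Finset.prod_congr rfl (fun j _ => by rw [show ((S.orderIsoOfFin rfl).toEquiv j : ℕ) = e j from Finset.coe_orderIsoOfFin_apply S rfl j])
  rw [h1]
  have h2 : ∏ j : Fin S.card, (1 + 1/(e j : ℝ))
      ≤ ∏ j : Fin S.card, (1 + 1/(Nat.nth Nat.Prime (j : ℕ) : ℝ)) := by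
    apply Finset.prod_le_prod
    · intro j _
      positivity
    · intro j _
      have hp : (0:ℝ) < Nat.nth Nat.Prime (j:ℕ) := by
        exact_mod_cast (Nat.prime_nth_prime (j:ℕ)).pos
      have := nth_le_orderEmb S hS j
      gcongr
  refine h2.trans ?_
  rw [Fin.prod_univ_eq_prod_range (fun j => (1 + 1/(Nat.nth Nat.Prime j : ℝ)))]
  have hsub : Finset.range S.card ⊆ Finset.range k := Finset.range_subset_range.2 hk
  have h1le : ∀ i : ℕ, (1:ℝ) ≤ 1 + 1/(Nat.nth Nat.Prime i : ℝ) := by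
    intro i
    have hp : (0:ℝ) < Nat.nth Nat.Prime i := by
      exact_mod_cast (Nat.prime_nth_prime i).pos
    have : (0:ℝ) ≤ 1/(Nat.nth Nat.Prime i : ℝ) := by positivity
    linarith
  calc ∏ i ∈ Finset.range S.card, (1 + 1/(Nat.nth Nat.Prime i : ℝ))
      ≤ (∏ i ∈ Finset.range k \ Finset.range S.card, (1 + 1/(Nat.nth Nat.Prime i : ℝ)))
        * ∏ i ∈ Finset.range S.card, (1 + 1/(Nat.nth Nat.Prime i : ℝ)) := by
        apply le_mul_of_one_le_left
        · apply Finset.prod_nonneg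
          intro i _
          linarith [h1le i]
        · calc (1:ℝ) = ∏ _i ∈ Finset.range k \ Finset.range S.card, (1:ℝ) := by
                rw [Finset.prod_const_one]
            _ ≤ _ := Finset.prod_le_prod (fun i _ => zero_le_one) (fun i _ => h1le i)
    _ = ∏ i ∈ Finset.range k, (1 + 1/(Nat.nth Nat.Prime i : ℝ)) :=
        Finset.prod_sdiff hsub

theorem psi_ratio_le_primorialN (m k : ℕ) (hm : 0 < m)
    (h : m.primeFactors.card ≤ k) :
    dedekindPsi m / m ≤ dedekindPsi (primorialN k) / primorialN k := by
  have hmne : (m:ℝ) ≠ 0 := Nat.cast_ne_zero.2 hm.ne'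
  have hNpos : 0 < primorialN k := Finset.prod_pos fun i _ => (Nat.prime_nth_prime i).pos
  have hNne : ((primorialN k : ℕ) : ℝ) ≠ 0 := Nat.cast_ne_zero.2 hNpos.ne'
  have hL : dedekindPsi m / m = ∏ p ∈ m.primeFactors, (1 + 1/(p:ℝ)) := by
    rw [dedekindPsi, mul_div_cancel_left₀ _ hmne]
  have hinj : ∀ x ∈ Finset.range k, ∀ y ∈ Finset.range k,
      Nat.nth Nat.Prime x = Nat.nth Nat.Prime y → x = y :=
    fun x _ y _ hxy => Nat.nth_injective inf_primes hxy
  have hprod : (∏ p ∈ (Finset.range k).image (Nat.nth Nat.Prime), p)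
      = ∏ i ∈ Finset.range k, Nat.nth Nat.Prime i := Finset.prod_image hinj
  have hfac : (primorialN k).primeFactors = (Finset.range k).image (Nat.nth Nat.Prime) := by
    rw [primorialN, ← hprod]
    apply Nat.primeFactors_prod
    intro p hp
    simp only [Finset.mem_image] at hp
    obtain ⟨i, _, rfl⟩ := hp
    exact Nat.prime_nth_prime i
  have hR : dedekindPsi (primorialN k) / primorialN k
      = ∏ i ∈ Finset.range k, (1 + 1/(Nat.nth Nat.Prime i : ℝ)) := by
    rw [dedekindPsi, mul_div_cancel_left₀ _ hNne, hfac,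
      Finset.prod_image hinj]
  rw [hL, hR]
  exact prod_psi_le _ (fun p hp => Nat.prime_of_mem_primeFactors hp) h
end

section
/- For every integer n ≥ 2 and every integer m with N_n ≤ m < N_{n+1}, one has R(m) ≤ R(N_n), where R(k) = Ψ(k)/(k·log log k). -/
open Finset Real Filter

/-- `R k = Ψ(k)/(k log log k)`. -/
noncomputable def Rratio (k : ℕ) : ℝ := dedekindPsi k / (k * Real.log (Real.log k))

lemma nth_prime_two_le (i : ℕ) : 2 ≤ Nat.nth Nat.Prime i :=
  (Nat.nth_mem_of_infinite Nat.infinite_setOf_prime i).two_le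

lemma nth_prime_prime (i : ℕ) : (Nat.nth Nat.Prime i).Prime :=
  Nat.nth_mem_of_infinite Nat.infinite_setOf_prime i

lemma aux_nth_le (S : Finset ℕ) (hS : ∀ p ∈ S, p.Prime) (i : Fin S.card) :
    Nat.nth Nat.Prime i ≤ S.orderEmbOfFin rfl i := by
  have hinf := Nat.infinite_setOf_prime
  have key : ∀ j : ℕ, ∀ hj : j < S.card, j ≤ Nat.count Nat.Prime (S.orderEmbOfFin rfl ⟨j, hj⟩) := by
    intro j
    induction j with
    | zero => intro hj; exact Nat.zero_le _
    | succ k ih =>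
      intro hj
      have hk : k < S.card := Nat.lt_of_succ_lt hj
      have h1 : k ≤ Nat.count Nat.Prime (S.orderEmbOfFin rfl ⟨k, hk⟩) := ih hk
      have hpk : Nat.Prime (S.orderEmbOfFin rfl ⟨k, hk⟩) :=
        hS _ (S.orderEmbOfFin_mem rfl _)
      have hlt : S.orderEmbOfFin rfl ⟨k, hk⟩ < S.orderEmbOfFin rfl ⟨k+1, hj⟩ := by
        apply (S.orderEmbOfFin rfl).strictMono
        exact Fin.mk_lt_mk.mpr (Nat.lt_succ_self k)
      calc k + 1 ≤ Nat.count Nat.Prime (S.orderEmbOfFin rfl ⟨k, hk⟩) + 1 := by omega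
        _ = Nat.count Nat.Prime (S.orderEmbOfFin rfl ⟨k, hk⟩ + 1) := by
            rw [Nat.count_succ, if_pos hpk]
        _ ≤ Nat.count Nat.Prime (S.orderEmbOfFin rfl ⟨k+1, hj⟩) :=
            Nat.count_monotone _ hlt
  have h := key i i.2
  have hp : Nat.Prime (S.orderEmbOfFin rfl i) := hS _ (S.orderEmbOfFin_mem rfl _)
  calc Nat.nth Nat.Prime i ≤ Nat.nth Nat.Prime (Nat.count Nat.Prime (S.orderEmbOfFin rfl i)) :=
        (Nat.nth_le_nth hinf).mpr (by simpa using h)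
    _ = S.orderEmbOfFin rfl i := Nat.nth_count hp

lemma aux_map_univ (S : Finset ℕ) : Finset.univ.map (S.orderEmbOfFin rfl).toEmbedding = S := by
  apply Finset.coe_injective
  simp [Finset.range_orderEmbOfFin]

/-- product of a finset of primes is at least the primorial of its cardinality -/
lemma primorial_card_le (S : Finset ℕ) (hS : ∀ p ∈ S, p.Prime) :
    primorialN S.card ≤ ∏ p ∈ S, p := by
  rw [primorialN, ← Fin.prod_univ_eq_prod_range]
  calc ∏ i : Fin S.card, Nat.nth Nat.Prime i
      ≤ ∏ i : Fin S.card, S.orderEmbOfFin rfl i :=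
        Finset.prod_le_prod' fun i _ => aux_nth_le S hS i
    _ = ∏ p ∈ S, p := by
        conv_rhs => rw [← aux_map_univ S]
        rw [Finset.prod_map]
        rfl

lemma prod_one_add_inv_le (S : Finset ℕ) (hS : ∀ p ∈ S, p.Prime) :
    ∏ p ∈ S, (1 + 1/(p:ℝ)) ≤ ∏ i ∈ Finset.range S.card, (1 + 1/(Nat.nth Nat.Prime i : ℝ)) := by
  rw [← Fin.prod_univ_eq_prod_range]
  have : ∏ p ∈ S, (1 + 1/(p:ℝ)) = ∏ i : Fin S.card, (1 + 1/((S.orderEmbOfFin rfl i : ℕ) : ℝ)) := by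
    conv_lhs => rw [← aux_map_univ S]
    rw [Finset.prod_map]
    rfl
  rw [this]
  apply Finset.prod_le_prod
  · intro i _
    positivity
  · intro i _
    have h1 := aux_nth_le S hS i
    have h2 : (0:ℝ) < Nat.nth Nat.Prime i := by
      have := nth_prime_two_le i; positivity
    have : (1:ℝ)/((S.orderEmbOfFin rfl i : ℕ) : ℝ) ≤ 1/(Nat.nth Nat.Prime i : ℝ) :=
      one_div_le_one_div_of_le h2 (by exact_mod_cast h1)
    linarith

lemma primorialN_mono : Monotone primorialN := by
  intro a b hab
  apply Finset.prod_le_prod_of_subset_of_one_le'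
  · exact Finset.range_subset_range.mpr hab
  · intro i _ _; exact le_trans (by norm_num) (nth_prime_two_le i)

lemma primorialN_two : primorialN 2 = 6 := by
  rw [primorialN]
  rw [Finset.prod_range_succ, Finset.prod_range_one, Nat.nth_prime_zero_eq_two,
    Nat.nth_prime_one_eq_three]
  norm_num


theorem R_le_R_primorialN (n : ℕ) (hn : 2 ≤ n) (m : ℕ)
    (h1 : primorialN n ≤ m) (h2 : m < primorialN (n+1)) :
    Rratio m ≤ Rratio (primorialN n) := by
  set N := primorialN n with hN
  have hN6 : 6 ≤ N := primorialN_two ▸ primorialN_mono hn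
  have hm6 : 6 ≤ m := le_trans hN6 h1
  have hmpos : 0 < m := by omega
  have hNpos : 0 < N := by omega
  have hSprime : ∀ p ∈ m.primeFactors, p.Prime := fun p hp => Nat.prime_of_mem_primeFactors hp
  -- card of prime factors ≤ n
  have hcard : m.primeFactors.card ≤ n := by
    by_contra h
    push_neg at h
    have hd : ∏ p ∈ m.primeFactors, p ≤ m :=
      Nat.le_of_dvd hmpos (Nat.prod_primeFactors_dvd m)
    have := calc primorialN (n+1) ≤ primorialN m.primeFactors.card := primorialN_mono h
      _ ≤ ∏ p ∈ m.primeFactors, p := primorial_card_le _ hSprime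
      _ ≤ m := hd
    omega
  -- prime factors of N
  have hNfac : N.primeFactors = (Finset.range n).image (Nat.nth Nat.Prime) := by
    have hinj : Set.InjOn (Nat.nth Nat.Prime) (Finset.range n) :=
      fun a _ b _ h => (Nat.nth_injective Nat.infinite_setOf_prime) h
    have : N = ∏ p ∈ (Finset.range n).image (Nat.nth Nat.Prime), p := by
      rw [hN, primorialN, Finset.prod_image (fun a ha b hb h => hinj ha hb h)]
    rw [this, Nat.primeFactors_prod]
    intro p hp
    obtain ⟨i, _, rfl⟩ := Finset.mem_image.mp hp
    exact nth_prime_prime i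
  have hNprod : ∏ p ∈ N.primeFactors, (1 + 1/(p:ℝ))
      = ∏ i ∈ Finset.range n, (1 + 1/(Nat.nth Nat.Prime i : ℝ)) := by
    rw [hNfac, Finset.prod_image]
    intro a _ b _ h
    exact Nat.nth_injective Nat.infinite_setOf_prime h
  -- product comparison
  have hPle : ∏ p ∈ m.primeFactors, (1 + 1/(p:ℝ)) ≤ ∏ p ∈ N.primeFactors, (1 + 1/(p:ℝ)) := by
    rw [hNprod]
    calc ∏ p ∈ m.primeFactors, (1 + 1/(p:ℝ))
        ≤ ∏ i ∈ Finset.range m.primeFactors.card, (1 + 1/(Nat.nth Nat.Prime i : ℝ)) :=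
          prod_one_add_inv_le _ hSprime
      _ ≤ ∏ i ∈ Finset.range n, (1 + 1/(Nat.nth Nat.Prime i : ℝ)) := by
          rw [← Finset.prod_range_mul_prod_Ico
            (fun i => (1 + 1/(Nat.nth Nat.Prime i : ℝ))) hcard]
          have hA : (0:ℝ) ≤ ∏ i ∈ Finset.range m.primeFactors.card,
              (1 + 1/(Nat.nth Nat.Prime i : ℝ)) := by
            apply Finset.prod_nonneg
            intro i _
            have := nth_prime_two_le i
            positivity
          have hB : (1:ℝ) ≤ ∏ i ∈ Finset.Ico m.primeFactors.card n,
              (1 + 1/(Nat.nth Nat.Prime i : ℝ)) := by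
            have h := Finset.prod_le_prod (s := Finset.Ico m.primeFactors.card n)
              (f := fun _ => (1:ℝ)) (g := fun i => 1 + 1/(Nat.nth Nat.Prime i : ℝ))
              (fun i _ => by norm_num)
              (fun i _ => by
                have h2 : (0:ℝ) < Nat.nth Nat.Prime i := by
                  have := nth_prime_two_le i; positivity
                have : (0:ℝ) ≤ 1/(Nat.nth Nat.Prime i:ℝ) := by positivity
                linarith)
            simpa using h
          nlinarith
  have hPNpos : 0 < ∏ p ∈ N.primeFactors, (1 + 1/(p:ℝ)) := by
    apply Finset.prod_pos
    intro p hp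
    have := (Nat.prime_of_mem_primeFactors hp).two_le
    have : (0:ℝ) < p := by positivity
    positivity
  -- log log bounds
  have hlog6 : (1:ℝ) < Real.log 6 := by
    rw [Real.lt_log_iff_exp_lt (by norm_num)]
    calc Real.exp 1 < 2.7182818286 := Real.exp_one_lt_d9
      _ < 6 := by norm_num
  have hlogN : (1:ℝ) < Real.log N := lt_of_lt_of_le hlog6
    (Real.log_le_log (by norm_num) (by exact_mod_cast hN6))
  have hLNpos : 0 < Real.log (Real.log N) := Real.log_pos hlogN
  have hlogm : Real.log N ≤ Real.log m :=
    Real.log_le_log (by positivity) (by exact_mod_cast h1)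
  have hLle : Real.log (Real.log N) ≤ Real.log (Real.log m) :=
    Real.log_le_log (by linarith) hlogm
  -- finish
  rw [Rratio, Rratio, dedekindPsi, dedekindPsi]
  have hmR : (0:ℝ) < m := by exact_mod_cast hmpos
  have hNR : (0:ℝ) < N := by exact_mod_cast hNpos
  rw [mul_div_mul_left _ _ (ne_of_gt hmR), mul_div_mul_left _ _ (ne_of_gt hNR)]
  exact div_le_div₀ hPNpos.le hPle hLNpos hLle
end
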